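/- Let A be a Banach algebra and B a Banach A-bimodule such that the span of products of 2n elements of A is dense in A, and A·B** ⊆ B and B**·A ⊆ B (as subsets of B** via the canonical embedding). If every continuous derivation from A into B* is inner, then for every n ≥ 0 every continuous derivation from A into B^(2n+1) is inner. -/

import Mathlib

open ContinuousLinearMap NormedSpace

namespace NormedSpace

/-- The old Mathlib `NormedSpace.Dual` (removed; now `StrongDual`), restated verbatim. -/
abbrev Dual (𝕜 : Type*) [NontriviallyNormedField 𝕜] (E : Type*) [SeminormedAddCommGroup E]
    [NormedSpace 𝕜 E] : Type _ := E →L[𝕜] 𝕜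

end NormedSpace

noncomputable section

section Defs

variable {X Y Z W : Type} [NormedAddCommGroup X] [NormedSpace ℝ X]
  [NormedAddCommGroup Y] [NormedSpace ℝ Y] [NormedAddCommGroup Z] [NormedSpace ℝ Z]
  [NormedAddCommGroup W] [NormedSpace ℝ W]

/-- The first adjoint `m^*` of a bounded bilinear map `m : X × Y → Z`,
as a map `Z^* × X → Y^*`, `⟨m^*(z',x), y⟩ = ⟨z', m(x,y)⟩`. -/
def adj1 (m : X →L[ℝ] Y →L[ℝ] Z) :
    Dual ℝ Z →L[ℝ] X →L[ℝ] Dual ℝ Y :=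
  (((ContinuousLinearMap.compL ℝ X (Y →L[ℝ] Z) (Dual ℝ Y)).flip m).comp
    (ContinuousLinearMap.compL ℝ Y Z ℝ))

@[simp] lemma adj1_apply (m : X →L[ℝ] Y →L[ℝ] Z) (z' : Dual ℝ Z) (x : X) (y : Y) :
    adj1 m z' x y = z' (m x y) := rfl

/-- The first (left) Arens extension `m^{***} : X^{**} × Y^{**} → Z^{**}` of a
bounded bilinear map `m : X × Y → Z`. -/
def arens (m : X →L[ℝ] Y →L[ℝ] Z) :
    Dual ℝ (Dual ℝ X) →L[ℝ] Dual ℝ (Dual ℝ Y) →L[ℝ] Dual ℝ (Dual ℝ Z) :=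
  adj1 (adj1 (adj1 m))

/-- The adjoint (dual map) of a bounded linear map. -/
def dualMap' (D : X →L[ℝ] Y) : Dual ℝ Y →L[ℝ] Dual ℝ X :=
  (ContinuousLinearMap.compL ℝ X Y ℝ).flip D

@[simp] lemma dualMap'_apply (D : X →L[ℝ] Y) (g : Dual ℝ Y) (x : X) :
    dualMap' D g x = g (D x) := rfl

/-- The second adjoint `D'' : X^{**} → Y^{**}` of a bounded linear map. -/
def bidualMap (D : X →L[ℝ] Y) : Dual ℝ (Dual ℝ X) →L[ℝ] Dual ℝ (Dual ℝ Y) :=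
  dualMap' (dualMap' D)

/-- Given an action `t : A × X → X`, the transposed action on the dual `X^*`:
`(dualAct t) a f = f ∘ (t a)`. -/
def dualAct (t : W →L[ℝ] X →L[ℝ] X) : W →L[ℝ] Dual ℝ X →L[ℝ] Dual ℝ X :=
  ((ContinuousLinearMap.compL ℝ X X ℝ).flip).comp t

@[simp] lemma dualAct_apply (t : W →L[ℝ] X →L[ℝ] X) (a : W) (f : Dual ℝ X) (x : X) :
    dualAct t a f x = f (t a x) := rfl

/-- `D : A → X` is a derivation with respect to the multiplication `mul'` on `A`
and the left action `l` and right action `r` (`r a x` means `x · a`) of `A` on `X`. -/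
def IsDer {A' : Type} [NormedAddCommGroup A'] [NormedSpace ℝ A']
    (mul' : A' →L[ℝ] A' →L[ℝ] A') (l r : A' →L[ℝ] X →L[ℝ] X) (D : A' →L[ℝ] X) : Prop :=
  ∀ a b : A', D (mul' a b) = l a (D b) + r b (D a)

/-- `D : A → X` is an inner derivation: `D a = a·x - x·a` for some `x`. -/
def IsInner {A' : Type} [NormedAddCommGroup A'] [NormedSpace ℝ A']
    (l r : A' →L[ℝ] X →L[ℝ] X) (D : A' →L[ℝ] X) : Prop :=
  ∃ x : X, ∀ a : A', D a = l a x - r a x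

/-- The bimodule axioms for actions `l`, `r` of an algebra with multiplication `mul'`. -/
def IsBimod {A' : Type} [NormedAddCommGroup A'] [NormedSpace ℝ A']
    (mul' : A' →L[ℝ] A' →L[ℝ] A') (l r : A' →L[ℝ] X →L[ℝ] X) : Prop :=
  (∀ a b x, l (mul' a b) x = l a (l b x)) ∧
  (∀ a b x, r (mul' a b) x = r b (r a x)) ∧
  (∀ a b x, l a (r b x) = r b (l a x))

/-- weak*-to-weak* continuity of a map between dual spaces. -/
def WStarCont (f : Dual ℝ X → Dual ℝ Y) : Prop :=
  ∀ y : Y, Continuous fun φ : WeakDual ℝ X => f φ y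

end Defs

/-- A packaged Banach `A`-bimodule (used to form iterated duals). -/
structure ModPk (A : Type) [NormedAddCommGroup A] [NormedSpace ℝ A] : Type 1 where
  X : Type
  [grp : NormedAddCommGroup X]
  [mod : NormedSpace ℝ X]
  l : A →L[ℝ] X →L[ℝ] X
  r : A →L[ℝ] X →L[ℝ] X

attribute [instance] ModPk.grp ModPk.mod

variable {A : Type} [NormedAddCommGroup A] [NormedSpace ℝ A]

/-- The canonical dual of a packaged bimodule. -/
def ModPk.dual (P : ModPk A) : ModPk A :=
  ⟨Dual ℝ P.X, dualAct P.r, dualAct P.l⟩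

/-- The `n`-th iterated dual of a packaged bimodule. -/
def ModPk.iter (P : ModPk A) : ℕ → ModPk A
  | 0 => P
  | n+1 => (P.iter n).dual

/-- A "level": an algebra (given by its bilinear multiplication) together with a bimodule. -/
structure Lvl : Type 1 where
  Alg : Type
  [g1 : NormedAddCommGroup Alg]
  [m1 : NormedSpace ℝ Alg]
  Mod : Type
  [g2 : NormedAddCommGroup Mod]
  [m2 : NormedSpace ℝ Mod]
  mul : Alg →L[ℝ] Alg →L[ℝ] Alg
  l : Alg →L[ℝ] Mod →L[ℝ] Mod
  r : Alg →L[ℝ] Mod →L[ℝ] Mod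

attribute [instance] Lvl.g1 Lvl.m1 Lvl.g2 Lvl.m2

/-- Passing to second duals: `A^{**}` with the first Arens product, acting on `B^{**}`
via the Arens extensions `π_ℓ^{***}` and `π_r^{***}` of the module actions. -/
def Lvl.double (Q : Lvl) : Lvl where
  Alg := Dual ℝ (Dual ℝ Q.Alg)
  Mod := Dual ℝ (Dual ℝ Q.Mod)
  mul := arens Q.mul
  l := arens Q.l
  r := (arens Q.r.flip).flip

/-- Iterated even duals: `Lvl.iter Q n` is the level `(A^{(2n)}, B^{(2n)})`. -/
def Lvl.iter (Q : Lvl) : ℕ → Lvl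
  | 0 => Q
  | n+1 => (Q.iter n).double

/-- The canonical embedding `A → A^{(2n)}`. -/
def Lvl.embA (Q : Lvl) : (n : ℕ) → Q.Alg →L[ℝ] (Q.iter n).Alg
  | 0 => ContinuousLinearMap.id ℝ _
  | n+1 => (inclusionInDoubleDual ℝ ((Q.iter n).Alg)).comp (Q.embA n)

/-- The canonical embedding `B → B^{(2n)}`. -/
def Lvl.embM (Q : Lvl) : (n : ℕ) → Q.Mod →L[ℝ] (Q.iter n).Mod
  | 0 => ContinuousLinearMap.id ℝ _
  | n+1 => (inclusionInDoubleDual ℝ ((Q.iter n).Mod)).comp (Q.embM n)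

/-- The left-topological-center condition `Z^ℓ_{A^{(2n+2)}}(B^{(2n+2)}) = B^{(2n+2)}`,
stated at the double of a level `Q`: for each `b` in the second-dual module, the map
`a ↦ b·a` is weak*-to-weak* continuous. -/
def Lvl.doubleZl (Q : Lvl) : Prop :=
  ∀ b : (Q.double).Mod, WStarCont (X := Dual ℝ Q.Alg) (Y := Dual ℝ Q.Mod)
    (fun a => (Q.double).r a b)

/-- The base level of a Banach algebra `A` with a Banach `A`-bimodule `B`. -/
def lvlOf (A : Type) [NormedRing A] [NormedAlgebra ℝ A]
    (B : Type) [NormedAddCommGroup B] [NormedSpace ℝ B]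
    (l r : A →L[ℝ] B →L[ℝ] B) : Lvl :=
  Lvl.mk A B (ContinuousLinearMap.mul ℝ A) l r

set_option maxHeartbeats 1000000

section Aux

variable {B X : Type} [NormedAddCommGroup B] [NormedSpace ℝ B]
  [NormedAddCommGroup X] [NormedSpace ℝ X]

lemma isBimod_dual {μ : A →L[ℝ] A →L[ℝ] A} {lX rX : A →L[ℝ] X →L[ℝ] X}
    (h : IsBimod μ lX rX) : IsBimod μ (dualAct rX) (dualAct lX) := by
  obtain ⟨h1, h2, h3⟩ := h
  refine ⟨fun a b f => ?_, fun a b f => ?_, fun a b f => ?_⟩ <;> ext x <;>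
    simp [h1, h2, h3]

lemma incl_dualAct (t : A →L[ℝ] X →L[ℝ] X) (a : A) (x : X) :
    dualAct (dualAct t) a (inclusionInDoubleDual ℝ X x) = inclusionInDoubleDual ℝ X (t a x) := by
  ext f
  simp [dual_def]

/-- Iterated composition of the dual actions of a list of algebra elements. -/
def chainC (t : A →L[ℝ] X →L[ℝ] X) (M : List A) : Dual ℝ X →L[ℝ] Dual ℝ X :=
  M.foldr (fun a T => (dualAct t a).comp T) (ContinuousLinearMap.id ℝ _)

lemma chainC_cons (t : A →L[ℝ] X →L[ℝ] X) (a : A) (M : List A) :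
    chainC t (a :: M) = (dualAct t a).comp (chainC t M) := rfl

lemma chainC_apply (t : A →L[ℝ] X →L[ℝ] X) (M : List A) (g : Dual ℝ X) :
    chainC t M g = M.foldr (fun a h => dualAct t a h) g := by
  induction M with
  | nil => rfl
  | cons a M ih => simp [chainC_cons, ih]

lemma kill_step (s : A →L[ℝ] B →L[ℝ] B) (t : A →L[ℝ] X →L[ℝ] X)
    (jm : B →L[ℝ] X) (em : Dual ℝ B →L[ℝ] Dual ℝ X)
    (hem : ∀ a φ, em (dualAct s a φ) = dualAct t a (em φ))
    (hpe : ∀ φ b, em φ (jm b) = φ b)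
    (hbase : ∀ (a : A) (Φ : Dual ℝ (Dual ℝ (Dual ℝ B))),
      (∀ b, Φ (inclusionInDoubleDual ℝ B b) = 0) →
      dualAct (dualAct (dualAct s)) a Φ = 0)
    (k : ℕ)
    (hkill : ∀ L : List A, L.length = k → ∀ f : Dual ℝ X, (∀ b, f (jm b) = 0) →
      L.foldr (fun a g => dualAct t a g) f = 0) :
    ∀ L : List A, L.length = k + 1 →
      ∀ f : Dual ℝ (Dual ℝ (Dual ℝ X)),
        (∀ b, f (inclusionInDoubleDual ℝ X (jm b)) = 0) →
        L.foldr (fun a g => dualAct (dualAct (dualAct t)) a g) f = 0 := by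
  intro L hL f hf
  have claimA : ∀ (M : List A) (G : Dual ℝ (Dual ℝ X)),
      (M.foldr (fun a g => dualAct (dualAct (dualAct t)) a g) f) G = f (G.comp (chainC t M)) := by
    intro M
    induction M with
    | nil =>
      intro G
      simp [chainC, ContinuousLinearMap.comp_id]
    | cons a M ih =>
      intro G
      have e1 : (dualAct (dualAct t) a G).comp (chainC t M) =
          G.comp (chainC t (a :: M)) := by
        ext g; simp [chainC_cons]
      calc ((a :: M).foldr (fun a g => dualAct (dualAct (dualAct t)) a g) f) G
          = (M.foldr (fun a g => dualAct (dualAct (dualAct t)) a g) f)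
              (dualAct (dualAct t) a G) := rfl
        _ = f ((dualAct (dualAct t) a G).comp (chainC t M)) := ih _
        _ = f (G.comp (chainC t (a :: M))) := by rw [e1]
  have chain_em : ∀ (M : List A) (ψ : Dual ℝ B), chainC t M (em ψ) = em (chainC s M ψ) := by
    intro M
    induction M with
    | nil => intro ψ; rfl
    | cons a M ih =>
      intro ψ
      rw [chainC_cons, ContinuousLinearMap.comp_apply, ih, ← hem, chainC_cons]
      rfl
  have claimB : ∀ g : Dual ℝ X, chainC t L g = em (chainC s L (dualMap' jm g)) := by
    cases L with
    | nil => simp at hL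
    | cons a M =>
      intro g
      have hMlen : M.length = k := by simpa using hL
      have hanng : ∀ b, (g - em (dualMap' jm g)) (jm b) = 0 := by
        intro b
        simp [hpe]
      have h0 : chainC t M (g - em (dualMap' jm g)) = 0 := by
        rw [chainC_apply]
        exact hkill M hMlen _ hanng
      have hdec : chainC t M g = chainC t M (em (dualMap' jm g)) := by
        conv_lhs => rw [show g = em (dualMap' jm g) + (g - em (dualMap' jm g)) by abel]
        rw [map_add, h0, add_zero]
      rw [chainC_cons, ContinuousLinearMap.comp_apply, hdec, chain_em, ← hem, chainC_cons]
      rfl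
  -- the pulled-back functional on B***
  have hbid : ∀ Ψ : Dual ℝ (Dual ℝ B), bidualMap jm Ψ = Ψ.comp (dualMap' jm) := by
    intro Ψ; ext g; simp [bidualMap]
  have hfann : ∀ b, (f.comp (bidualMap jm)) (inclusionInDoubleDual ℝ B b) = 0 := by
    intro b
    have : bidualMap jm (inclusionInDoubleDual ℝ B b) = inclusionInDoubleDual ℝ X (jm b) := by
      ext g; simp [bidualMap, dual_def]
    simp only [ContinuousLinearMap.comp_apply, this]
    exact hf b
  have final : ∀ (M : List A), M ≠ [] → ∀ φ : Dual ℝ (Dual ℝ B),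
      (f.comp (bidualMap jm)) (φ.comp (chainC s M)) = 0 := by
    intro M
    induction M with
    | nil => intro h; exact absurd rfl h
    | cons a M ih =>
      intro _ φ
      have hstep : φ.comp (chainC s (a :: M)) = (dualAct (dualAct s) a φ).comp (chainC s M) := by
        ext ψ; simp [chainC_cons]
      rw [hstep]
      cases M with
      | nil =>
        have h2 : (dualAct (dualAct s) a φ).comp (chainC s []) = dualAct (dualAct s) a φ := by
          ext ψ; rfl
        rw [h2]
        have h0 := hbase a (f.comp (bidualMap jm)) hfann
        have h3 : (f.comp (bidualMap jm)) (dualAct (dualAct s) a φ) =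
            (dualAct (dualAct (dualAct s)) a (f.comp (bidualMap jm))) φ := rfl
        rw [h3, h0]
        rfl
      | cons b M' => exact ih (by simp) _
  ext G
  rw [ContinuousLinearMap.zero_apply, claimA L G]
  have e2 : G.comp (chainC t L) = ((G.comp em).comp (chainC s L)).comp (dualMap' jm) := by
    ext g
    simp only [ContinuousLinearMap.comp_apply, claimB g]
  rw [e2, ← hbid]
  exact final L (by rintro rfl; simp at hL) (G.comp em)

end Aux

section Tower

variable {B X : Type} [NormedAddCommGroup B] [NormedSpace ℝ B]
  [NormedAddCommGroup X] [NormedSpace ℝ X]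

/-- The canonical embedding `B → B^{(2k)}`. -/
def Jmap (P : ModPk A) : (k : ℕ) → P.X →L[ℝ] (P.iter (2*k)).X
  | 0 => ContinuousLinearMap.id ℝ _
  | k+1 => (inclusionInDoubleDual ℝ ((P.iter (2*k)).X)).comp (Jmap P k)

/-- The canonical embedding `B^* → B^{(2k+1)}`. -/
def Emap (P : ModPk A) : (k : ℕ) → Dual ℝ P.X →L[ℝ] Dual ℝ ((P.iter (2*k)).X)
  | 0 => ContinuousLinearMap.id ℝ _
  | k+1 => (inclusionInDoubleDual ℝ (Dual ℝ ((P.iter (2*k)).X))).comp (Emap P k)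

lemma Jmap_l (P : ModPk A) : ∀ (k : ℕ) (a : A) (b : P.X),
    Jmap P k (P.l a b) = (P.iter (2*k)).l a (Jmap P k b)
  | 0, a, b => rfl
  | k+1, a, b => by
    show inclusionInDoubleDual ℝ ((P.iter (2*k)).X) (Jmap P k (P.l a b)) = _
    rw [Jmap_l P k]
    exact (incl_dualAct ((P.iter (2*k)).l) a (Jmap P k b)).symm

lemma Jmap_r (P : ModPk A) : ∀ (k : ℕ) (a : A) (b : P.X),
    Jmap P k (P.r a b) = (P.iter (2*k)).r a (Jmap P k b)
  | 0, a, b => rfl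
  | k+1, a, b => by
    show inclusionInDoubleDual ℝ ((P.iter (2*k)).X) (Jmap P k (P.r a b)) = _
    rw [Jmap_r P k]
    exact (incl_dualAct ((P.iter (2*k)).r) a (Jmap P k b)).symm

lemma Emap_l (P : ModPk A) : ∀ (k : ℕ) (a : A) (φ : Dual ℝ P.X),
    Emap P k (dualAct P.r a φ) = dualAct ((P.iter (2*k)).r) a (Emap P k φ)
  | 0, a, φ => rfl
  | k+1, a, φ => by
    show inclusionInDoubleDual ℝ (Dual ℝ ((P.iter (2*k)).X)) (Emap P k (dualAct P.r a φ)) = _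
    rw [Emap_l P k]
    exact (incl_dualAct (dualAct ((P.iter (2*k)).r)) a (Emap P k φ)).symm

lemma Emap_r (P : ModPk A) : ∀ (k : ℕ) (a : A) (φ : Dual ℝ P.X),
    Emap P k (dualAct P.l a φ) = dualAct ((P.iter (2*k)).l) a (Emap P k φ)
  | 0, a, φ => rfl
  | k+1, a, φ => by
    show inclusionInDoubleDual ℝ (Dual ℝ ((P.iter (2*k)).X)) (Emap P k (dualAct P.l a φ)) = _
    rw [Emap_r P k]
    exact (incl_dualAct (dualAct ((P.iter (2*k)).l)) a (Emap P k φ)).symm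

lemma Epair (P : ModPk A) : ∀ (k : ℕ) (φ : Dual ℝ P.X) (b : P.X),
    Emap P k φ (Jmap P k b) = φ b
  | 0, φ, b => rfl
  | k+1, φ, b => by
    show (inclusionInDoubleDual ℝ (Dual ℝ ((P.iter (2*k)).X)) (Emap P k φ))
        (inclusionInDoubleDual ℝ ((P.iter (2*k)).X) (Jmap P k b)) = φ b
    rw [dual_def, dual_def]
    exact Epair P k φ b

lemma bimod_iter {μ : A →L[ℝ] A →L[ℝ] A} (P : ModPk A) (h : IsBimod μ P.l P.r) :
    ∀ m, IsBimod μ (P.iter m).l (P.iter m).r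
  | 0 => h
  | m+1 => isBimod_dual (bimod_iter P h m)

lemma kill_tower (P : ModPk A)
    (hl2 : ∀ (a : A) (G : (P.iter 2).X), ∃ b, (P.iter 2).l a G = inclusionInDoubleDual ℝ P.X b)
    (hr2 : ∀ (a : A) (G : (P.iter 2).X), ∃ b, (P.iter 2).r a G = inclusionInDoubleDual ℝ P.X b) :
    ∀ (k : ℕ) (L : List A), L.length = k + 1 →
      ∀ f : Dual ℝ ((P.iter (2*(k+1))).X), (∀ b, f (Jmap P (k+1) b) = 0) →
        L.foldr (fun a g => dualAct ((P.iter (2*(k+1))).r) a g) f = 0 ∧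
        L.foldr (fun a g => dualAct ((P.iter (2*(k+1))).l) a g) f = 0 := by
  intro k
  induction k with
  | zero =>
    intro L hL f hf
    obtain ⟨a, rfl⟩ := List.length_eq_one_iff.mp hL
    constructor <;> ext G <;>
      simp only [List.foldr, dualAct_apply, ContinuousLinearMap.zero_apply]
    · obtain ⟨b, hb⟩ := hr2 a G
      rw [show ((P.iter 2).r a G : Dual ℝ (Dual ℝ P.X)) = inclusionInDoubleDual ℝ P.X b from hb]
      exact hf b
    · obtain ⟨b, hb⟩ := hl2 a G
      rw [show ((P.iter 2).l a G : Dual ℝ (Dual ℝ P.X)) = inclusionInDoubleDual ℝ P.X b from hb]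
      exact hf b
  | succ k ih =>
    intro L hL f hf
    have hbaseR : ∀ (a : A) (Φ : Dual ℝ (Dual ℝ (Dual ℝ P.X))),
        (∀ b, Φ (inclusionInDoubleDual ℝ P.X b) = 0) →
        dualAct (dualAct (dualAct P.r)) a Φ = 0 := by
      intro a Φ hΦ
      ext G
      obtain ⟨b, hb⟩ := hr2 a G
      simp only [dualAct_apply, ContinuousLinearMap.zero_apply]
      rw [show dualAct (dualAct P.r) a G = (P.iter 2).r a G from rfl, hb]
      exact hΦ b
    have hbaseL : ∀ (a : A) (Φ : Dual ℝ (Dual ℝ (Dual ℝ P.X))),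
        (∀ b, Φ (inclusionInDoubleDual ℝ P.X b) = 0) →
        dualAct (dualAct (dualAct P.l)) a Φ = 0 := by
      intro a Φ hΦ
      ext G
      obtain ⟨b, hb⟩ := hl2 a G
      simp only [dualAct_apply, ContinuousLinearMap.zero_apply]
      rw [show dualAct (dualAct P.l) a G = (P.iter 2).l a G from rfl, hb]
      exact hΦ b
    constructor
    · exact kill_step P.r ((P.iter (2*(k+1))).r) (Jmap P (k+1)) (Emap P (k+1))
        (Emap_l P (k+1)) (Epair P (k+1)) hbaseR (k+1)
        (fun L hL f hf => (ih L hL f hf).1) L hL f hf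
    · exact kill_step P.l ((P.iter (2*(k+1))).l) (Jmap P (k+1)) (Emap P (k+1))
        (Emap_r P (k+1)) (Epair P (k+1)) hbaseL (k+1)
        (fun L hL f hf => (ih L hL f hf).2) L hL f hf

end Tower

/-- **Theorem 2-5.** Let `A` be a Banach algebra, `B` a Banach `A`-bimodule such that the
span of products of `2n` elements of `A` is dense in `A`, and `A·B** ⊆ B`, `B**·A ⊆ B`.
If every continuous derivation `A → B*` is inner then every continuous derivation
`A → B^(2n+1)` is inner. -/
theorem stmt4 (A : Type) [NormedRing A] [NormedAlgebra ℝ A] [CompleteSpace A]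
    (B : Type) [NormedAddCommGroup B] [NormedSpace ℝ B] [CompleteSpace B]
    (l r : A →L[ℝ] B →L[ℝ] B)
    (hbim : IsBimod (ContinuousLinearMap.mul ℝ A) l r)
    (n : ℕ)
    -- the span of `A^[2n]` is dense in `A`
    (hdense : Dense (Submodule.span ℝ {x : A | ∃ L : List A, L.length = 2*n ∧ L.prod = x} : Set A))
    -- `A·B** ⊆ B` and `B**·A ⊆ B`
    (hl2 : ∀ (a : A) (G : ((ModPk.mk B l r).iter 2).X),
      ∃ b : B, ((ModPk.mk B l r).iter 2).l a G = inclusionInDoubleDual ℝ B b)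
    (hr2 : ∀ (a : A) (G : ((ModPk.mk B l r).iter 2).X),
      ∃ b : B, ((ModPk.mk B l r).iter 2).r a G = inclusionInDoubleDual ℝ B b)
    -- `H¹(A, B*) = 0`
    (h1 : ∀ D : A →L[ℝ] ((ModPk.mk B l r).iter 1).X,
      IsDer (ContinuousLinearMap.mul ℝ A) ((ModPk.mk B l r).iter 1).l ((ModPk.mk B l r).iter 1).r D →
      IsInner ((ModPk.mk B l r).iter 1).l ((ModPk.mk B l r).iter 1).r D) :
    -- `H¹(A, B^(2n+1)) = 0`
    ∀ D : A →L[ℝ] ((ModPk.mk B l r).iter (2*n+1)).X,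
      IsDer (ContinuousLinearMap.mul ℝ A) ((ModPk.mk B l r).iter (2*n+1)).l
        ((ModPk.mk B l r).iter (2*n+1)).r D →
      IsInner ((ModPk.mk B l r).iter (2*n+1)).l ((ModPk.mk B l r).iter (2*n+1)).r D := by
  intro D hD
  cases n with
  | zero => exact h1 D hD
  | succ m =>
    revert D hD
    show ∀ D : A →L[ℝ] Dual ℝ (((ModPk.mk B l r).iter (2*(m+1))).X),
        IsDer (ContinuousLinearMap.mul ℝ A)
          (dualAct (((ModPk.mk B l r).iter (2*(m+1))).r))
          (dualAct (((ModPk.mk B l r).iter (2*(m+1))).l)) D →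
        IsInner (dualAct (((ModPk.mk B l r).iter (2*(m+1))).r))
          (dualAct (((ModPk.mk B l r).iter (2*(m+1))).l)) D
    intro D hD
    obtain ⟨hb1, hb2, hb3⟩ :
        IsBimod (ContinuousLinearMap.mul ℝ A)
          (dualAct (((ModPk.mk B l r).iter (2*(m+1))).r))
          (dualAct (((ModPk.mk B l r).iter (2*(m+1))).l)) :=
      bimod_iter (ModPk.mk B l r) hbim (2*(m+1)+1)
    have hJl : ∀ (a : A) (c : B),
        Jmap (ModPk.mk B l r) (m+1) (l a c)
          = ((ModPk.mk B l r).iter (2*(m+1))).l a (Jmap (ModPk.mk B l r) (m+1) c) :=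
      Jmap_l (ModPk.mk B l r) (m+1)
    have hJr : ∀ (a : A) (c : B),
        Jmap (ModPk.mk B l r) (m+1) (r a c)
          = ((ModPk.mk B l r).iter (2*(m+1))).r a (Jmap (ModPk.mk B l r) (m+1) c) :=
      Jmap_r (ModPk.mk B l r) (m+1)
    have hpe : ∀ (φ : Dual ℝ B) (c : B),
        Emap (ModPk.mk B l r) (m+1) φ (Jmap (ModPk.mk B l r) (m+1) c) = φ c :=
      Epair (ModPk.mk B l r) (m+1)
    set D₁ : A →L[ℝ] Dual ℝ B := (dualMap' (Jmap (ModPk.mk B l r) (m+1))).comp D with hD₁def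
    have hD₁app : ∀ (p : A) (c : B),
        D₁ p c = D p (Jmap (ModPk.mk B l r) (m+1) c) := by
      intro p c; rw [hD₁def]; rfl
    have hD₁der : IsDer (ContinuousLinearMap.mul ℝ A) (dualAct r) (dualAct l) D₁ := by
      intro p q
      ext c
      simp only [ContinuousLinearMap.add_apply, dualAct_apply, hD₁app]
      rw [hD p q]
      simp only [ContinuousLinearMap.add_apply, dualAct_apply]
      rw [← hJr p c, ← hJl q c]
    obtain ⟨ψ, hψ⟩ := h1 D₁ hD₁der
    have hψ' : ∀ p : A, D₁ p = dualAct r p ψ - dualAct l p ψ := hψ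
    set x₀ : Dual ℝ (((ModPk.mk B l r).iter (2*(m+1))).X) :=
      Emap (ModPk.mk B l r) (m+1) ψ with hx₀def
    set ad : A →L[ℝ] Dual ℝ (((ModPk.mk B l r).iter (2*(m+1))).X) :=
      (dualAct (((ModPk.mk B l r).iter (2*(m+1))).r)).flip x₀
        - (dualAct (((ModPk.mk B l r).iter (2*(m+1))).l)).flip x₀ with haddef
    set D₂ : A →L[ℝ] Dual ℝ (((ModPk.mk B l r).iter (2*(m+1))).X) := D - ad with hD₂def
    have hD₂app : ∀ p : A,
        D₂ p = D p - (dualAct (((ModPk.mk B l r).iter (2*(m+1))).r) p x₀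
             - dualAct (((ModPk.mk B l r).iter (2*(m+1))).l) p x₀) := by
      intro p
      rw [hD₂def, haddef]
      simp [ContinuousLinearMap.sub_apply, ContinuousLinearMap.flip_apply]
    have hann : ∀ (p : A) (c : B), D₂ p (Jmap (ModPk.mk B l r) (m+1) c) = 0 := by
      intro p c
      have e := DFunLike.congr_fun (hψ' p) c
      simp only [ContinuousLinearMap.sub_apply, dualAct_apply, hD₁app] at e
      rw [hD₂app p]
      simp only [ContinuousLinearMap.sub_apply, dualAct_apply]
      rw [← hJr p c, ← hJl p c, hx₀def]
      rw [e, hpe ψ (r p c), hpe ψ (l p c)]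
      change (show Dual ℝ B from ψ) (r p c) - (show Dual ℝ B from ψ) (l p c)
        - ((show Dual ℝ B from ψ) (r p c) - (show Dual ℝ B from ψ) (l p c)) = 0
      ring
    have hD₂der : ∀ p q : A, D₂ (ContinuousLinearMap.mul ℝ A p q)
        = dualAct (((ModPk.mk B l r).iter (2*(m+1))).r) p (D₂ q)
          + dualAct (((ModPk.mk B l r).iter (2*(m+1))).l) q (D₂ p) := by
      intro p q
      rw [hD₂app (ContinuousLinearMap.mul ℝ A p q), hD₂app q, hD₂app p]
      rw [hD p q, hb1 p q x₀, hb2 p q x₀]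
      simp only [map_sub]
      rw [hb3 p q x₀]
      abel
    have prodL : ∀ (M : List A), M ≠ [] →
        ∀ y : Dual ℝ (((ModPk.mk B l r).iter (2*(m+1))).X),
        dualAct (((ModPk.mk B l r).iter (2*(m+1))).r) M.prod y
          = M.foldr (fun a z => dualAct (((ModPk.mk B l r).iter (2*(m+1))).r) a z) y := by
      intro M
      induction M with
      | nil => intro h; exact absurd rfl h
      | cons a M ih =>
        intro _ y
        cases M with
        | nil => simp
        | cons b M' =>
          rw [List.prod_cons, ← ContinuousLinearMap.mul_apply' (𝕜 := ℝ) (R := A), hb1, ih (by simp)]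
          rfl
    have prodR : ∀ (M : List A), M ≠ [] →
        ∀ y : Dual ℝ (((ModPk.mk B l r).iter (2*(m+1))).X),
        dualAct (((ModPk.mk B l r).iter (2*(m+1))).l) M.prod y
          = M.reverse.foldr (fun a z => dualAct (((ModPk.mk B l r).iter (2*(m+1))).l) a z) y := by
      intro M
      induction M with
      | nil => intro h; exact absurd rfl h
      | cons a M ih =>
        intro _ y
        cases M with
        | nil => simp
        | cons b M' =>
          rw [List.reverse_cons, List.foldr_append]
          rw [List.prod_cons, ← ContinuousLinearMap.mul_apply' (𝕜 := ℝ) (R := A), hb2, ih (by simp)]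
          rfl
    have hvan : ∀ x : A, (∃ L : List A, L.length = 2*(m+1) ∧ L.prod = x) → D₂ x = 0 := by
      rintro x ⟨L, hLlen, rfl⟩
      have h₁ : (L.take (m+1)).length = m+1 := by rw [List.length_take, hLlen]; omega
      have h₂ : (L.drop (m+1)).length = m+1 := by rw [List.length_drop, hLlen]; omega
      have hne₁ : L.take (m+1) ≠ [] := by
        intro h; rw [h] at h₁; simp at h₁
      have hne₂ : L.drop (m+1) ≠ [] := by
        intro h; rw [h] at h₂; simp at h₂
      have hprod : L.prod = (L.take (m+1)).prod * (L.drop (m+1)).prod :=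
        (List.prod_take_mul_prod_drop L (m+1)).symm
      rw [hprod, ← ContinuousLinearMap.mul_apply' (𝕜 := ℝ) (R := A), hD₂der]
      have k₁ := (kill_tower (ModPk.mk B l r) hl2 hr2 m (L.take (m+1)) h₁
        (D₂ ((L.drop (m+1)).prod)) (fun c => hann _ c)).1
      have k₂ := (kill_tower (ModPk.mk B l r) hl2 hr2 m ((L.drop (m+1)).reverse)
        (by rw [List.length_reverse]; exact h₂)
        (D₂ ((L.take (m+1)).prod)) (fun c => hann _ c)).2
      rw [prodL _ hne₁, prodR _ hne₂, k₁, k₂, add_zero]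
    have hzero : ∀ p : A, D₂ p = 0 := by
      have hclosed : IsClosed {x : A | D₂ x = 0} :=
        isClosed_eq D₂.continuous continuous_const
      have hker : Submodule.span ℝ {x : A | ∃ L : List A, L.length = 2*(m+1) ∧ L.prod = x}
          ≤ LinearMap.ker D₂.toLinearMap :=
        Submodule.span_le.2 fun x hx => LinearMap.mem_ker.2 (hvan x hx)
      intro p
      have hp : p ∈ closure
          (Submodule.span ℝ {x : A | ∃ L : List A, L.length = 2*(m+1) ∧ L.prod = x} : Set A) := by
        rw [hdense.closure_eq]; trivial
      exact closure_minimal (fun x hx => LinearMap.mem_ker.1 (hker hx)) hclosed hp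
    refine ⟨x₀, fun p => ?_⟩
    have h0 := hzero p
    rw [hD₂app p] at h0
    exact sub_eq_zero.mp h0
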